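/- Let n be an even positive integer, 0 < p ≤ 1, and let i be an integer with 0 ≤ i ≤ n. Then Σ_{j₁ ≥ 0} Σ_{j₂ ≥ 0} ((1−p)/p)^{j₁+j₂} · M(n/2; j₁, j₂) · C(n − 2j₁ − 2j₂, i − 2j₂) = Σ_{j ≥ 0} 2^j · (1/p)^{n/2 − j} · M₃(n/2; j, (n−i−j)/2, (i−j)/2), where M(m; a, b) = m!/(a! b! (m−a−b)!) when a + b ≤ m (and 0 otherwise), C(a,b) is the ordinary binomial coefficient (0 when b < 0 or b > a), and M₃(m; a, b, c) = m!/(a! b! c!) when a, b, c are nonnegative integers with a + b + c = m (and 0 otherwise, in particular when (n−i−j)/2 or (i−j)/2 is not a nonnegative integer). -/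

import Mathlib

open Finset

/-- `M(m; a, b) = m!/(a! b! (m−a−b)!)` when `a + b ≤ m`, and `0` otherwise. -/
noncomputable def Mcoef (m a b : ℕ) : ℝ :=
  if a + b ≤ m then
    (Nat.factorial m : ℝ) /
      ((Nat.factorial a : ℝ) * (Nat.factorial b : ℝ) * (Nat.factorial (m - a - b) : ℝ))
  else 0

/-- `M₃(m; a, b, c) = m!/(a! b! c!)` when `a, b, c` are nonnegative integers with
`a + b + c = m`, and `0` otherwise (in particular when some argument is not a
nonnegative integer). -/
noncomputable def M3 (m : ℕ) (a b c : ℚ) : ℝ :=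
  if 0 ≤ a ∧ 0 ≤ b ∧ 0 ≤ c ∧ a.den = 1 ∧ b.den = 1 ∧ c.den = 1 ∧ a + b + c = (m : ℚ) then
    (Nat.factorial m : ℝ) /
      ((Nat.factorial a.num.toNat : ℝ) * (Nat.factorial b.num.toNat : ℝ) *
        (Nat.factorial c.num.toNat : ℝ))
  else 0

/-- Ordinary binomial coefficient `C(a, b)` for integers, `0` when `b < 0` or `b > a`. -/
noncomputable def Cb (a b : ℤ) : ℝ :=
  if 0 ≤ b ∧ b ≤ a then ((a.toNat).choose b.toNat : ℝ) else 0

/-- Generalized binomial coefficient `C̃(m, r) = m(m−1)⋯(m−r+1)/r!` for integer `m`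
and integer `r ≥ 0`, and `0` for `r < 0`. -/
noncomputable def Cgen (m r : ℤ) : ℝ :=
  if 0 ≤ r then (∏ k ∈ Finset.range r.toNat, ((m : ℝ) - (k : ℝ))) / (Nat.factorial r.toNat : ℝ)
  else 0

open Polynomial in
private lemma coeffXsq (N d : ℕ) :
    ((1 + X ^ 2 : ℝ[X]) ^ N).coeff d = if d % 2 = 0 then ((N.choose (d / 2)) : ℝ) else 0 := by
  rw [add_comm, add_pow, Polynomial.finset_sum_coeff]
  simp only [one_pow, mul_one, ← pow_mul]
  have h : ∀ b ∈ Finset.range (N+1),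
      ((X:ℝ[X]) ^ (2*b) * (N.choose b : ℝ[X])).coeff d
        = if d % 2 = 0 ∧ d / 2 = b then (N.choose b : ℝ) else 0 := by
    intro b _
    rw [mul_comm, Polynomial.coeff_natCast_mul, Polynomial.coeff_X_pow]
    by_cases h1 : d % 2 = 0 ∧ d / 2 = b
    · have h2 : d = 2 * b := by omega
      simp [h2, h1]
    · have h2 : d ≠ 2 * b := by omega
      simp [h2, h1]
  rw [Finset.sum_congr rfl h]
  by_cases he : d % 2 = 0
  · simp only [he, true_and]
    rw [Finset.sum_ite_eq]
    by_cases hdN : d / 2 ≤ N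
    · simp [Finset.mem_range, Nat.lt_succ_iff, hdN]
    · simp [Finset.mem_range, Nat.lt_succ_iff, hdN, Nat.choose_eq_zero_of_lt (by omega : N < d/2)]
  · simp [he]

open Polynomial in
private lemma wayB (r : ℝ) (m i : ℕ) :
    ((Polynomial.C r * (1 + X ^ 2) + Polynomial.C 2 * X : ℝ[X]) ^ m).coeff i
      = ∑ j ∈ Finset.range (m+1), 2 ^ j * r ^ (m - j) * (m.choose j : ℝ) *
          (if j ≤ i ∧ (i - j) % 2 = 0 then (((m-j).choose ((i-j)/2)) : ℝ) else 0) := by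
  rw [add_comm (Polynomial.C r * (1 + X ^ 2)), add_pow, Polynomial.finset_sum_coeff]
  refine Finset.sum_congr rfl fun j hj => ?_
  have h1 : (Polynomial.C 2 * X : ℝ[X]) ^ j * (Polynomial.C r * (1 + X ^ 2)) ^ (m - j) * (m.choose j : ℝ[X])
      = Polynomial.C (2 ^ j * r ^ (m-j) * (m.choose j : ℝ)) * ((1 + X^2)^(m-j) * X ^ j) := by
    simp only [mul_pow, map_mul, map_pow, map_natCast]
    push_cast
    ring
  rw [h1, Polynomial.coeff_C_mul, Polynomial.coeff_mul_X_pow', coeffXsq]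
  by_cases h2 : j ≤ i ∧ (i - j) % 2 = 0
  · simp [h2, h2.1, h2.2]
  · by_cases h3 : j ≤ i
    · have h4 : ¬ (i - j) % 2 = 0 := fun h => h2 ⟨h3, h⟩
      simp [h3, h4]
    · simp [h3, h2]

open Polynomial in
private lemma wayA (q : ℝ) (m i : ℕ) :
    ((Polynomial.C q * (1 + X ^ 2) + (1 + X) ^ 2 : ℝ[X]) ^ m).coeff i
      = ∑ k ∈ Finset.range (m+1), ∑ b ∈ Finset.range (m+1),
          q ^ k * ((m.choose k : ℝ) * (k.choose b : ℝ)) *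
            (if 2*b ≤ i then (((2*(m-k)).choose (i - 2*b)) : ℝ) else 0) := by
  rw [add_pow, Polynomial.finset_sum_coeff]
  refine Finset.sum_congr rfl fun k hk => ?_
  simp only [Finset.mem_range, Nat.lt_succ_iff] at hk
  have h1 : (Polynomial.C q * (1 + X ^ 2) : ℝ[X]) ^ k * ((1 + X) ^ 2) ^ (m - k) * (m.choose k : ℝ[X])
      = Polynomial.C (q ^ k * (m.choose k : ℝ)) * ((1 + X^2)^k * (1 + X) ^ (2*(m-k))) := by
    simp only [mul_pow, map_mul, map_pow, map_natCast, ← pow_mul]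
    ring
  rw [h1, Polynomial.coeff_C_mul]
  have h2 : ((1 + X^2 : ℝ[X])^k * (1 + X) ^ (2*(m-k))).coeff i
      = ∑ b ∈ Finset.range (k+1), (k.choose b : ℝ) *
          (if 2*b ≤ i then (((2*(m-k)).choose (i - 2*b)) : ℝ) else 0) := by
    rw [add_comm (1:ℝ[X]) (X^2), add_pow, Finset.sum_mul, Polynomial.finset_sum_coeff]
    refine Finset.sum_congr rfl fun b hb => ?_
    have h3 : ((X:ℝ[X]) ^ 2) ^ b * 1 ^ (k - b) * (k.choose b : ℝ[X]) * (1 + X) ^ (2*(m-k))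
        = Polynomial.C (k.choose b : ℝ) * ((1 + X) ^ (2*(m-k)) * X ^ (2*b)) := by
      simp only [one_pow, mul_one, map_natCast, ← pow_mul]
      ring
    rw [h3, Polynomial.coeff_C_mul, Polynomial.coeff_mul_X_pow', Polynomial.coeff_one_add_X_pow]
  rw [h2, Finset.mul_sum]
  rw [Finset.sum_subset (by intro x hx; simp at hx ⊢; omega : Finset.range (k+1) ⊆ Finset.range (m+1))]
  · refine Finset.sum_congr rfl fun b hb => ?_
    ring
  · intro b hb hb2
    simp only [Finset.mem_range, Nat.lt_succ_iff] at hb hb2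
    have hz : k.choose b = 0 := Nat.choose_eq_zero_of_lt (by omega)
    rw [hz]
    simp

private lemma McoefEq (m j1 j2 : ℕ) (h : j1 + j2 ≤ m) :
    Mcoef m j1 j2 = (m.choose (j1+j2) : ℝ) * ((j1+j2).choose j2 : ℝ) := by
  rw [Mcoef, if_pos h, Nat.cast_choose ℝ h, Nat.cast_choose ℝ (Nat.le_add_left j2 j1)]
  have e1 : m - (j1 + j2) = m - j1 - j2 := by omega
  have e2 : j1 + j2 - j2 = j1 := by omega
  rw [e1, e2]
  have n1 : (Nat.factorial j1 : ℝ) ≠ 0 := Nat.cast_ne_zero.2 (Nat.factorial_ne_zero _)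
  have n2 : (Nat.factorial j2 : ℝ) ≠ 0 := Nat.cast_ne_zero.2 (Nat.factorial_ne_zero _)
  have n3 : (Nat.factorial (m - j1 - j2) : ℝ) ≠ 0 := Nat.cast_ne_zero.2 (Nat.factorial_ne_zero _)
  have n4 : (Nat.factorial (j1 + j2) : ℝ) ≠ 0 := Nat.cast_ne_zero.2 (Nat.factorial_ne_zero _)
  field_simp

lemma CbEq (n m i j1 j2 : ℕ) (hn : n = 2*m) (h : j1 + j2 ≤ m) :
    Cb ((n:ℤ) - 2*j1 - 2*j2) ((i:ℤ) - 2*j2)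
      = if 2*j2 ≤ i then (((2*(m-(j1+j2))).choose (i - 2*j2)) : ℝ) else 0 := by
  rw [Cb]
  by_cases h1 : 2*j2 ≤ i
  · rw [if_pos h1]
    by_cases h2 : (i:ℤ) - 2*j2 ≤ (n:ℤ) - 2*j1 - 2*j2
    · rw [if_pos ⟨by omega, h2⟩]
      have e1 : ((n:ℤ) - 2*j1 - 2*j2).toNat = 2*(m-(j1+j2)) := by omega
      have e2 : ((i:ℤ) - 2*j2).toNat = i - 2*j2 := by omega
      rw [e1, e2]
    · rw [if_neg (by tauto)]
      have hz : (2*(m-(j1+j2))).choose (i - 2*j2) = 0 :=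
        Nat.choose_eq_zero_of_lt (by omega)
      rw [hz, Nat.cast_zero]
  · rw [if_neg h1, if_neg (by omega)]

private lemma M3Eq (n m i j : ℕ) (hn : n = 2*m) (hi : i ≤ n) (hj : j ≤ m) :
    M3 m (j:ℚ) (((n:ℚ) - i - j)/2) (((i:ℚ) - j)/2)
      = (m.choose j : ℝ) *
          (if j ≤ i ∧ (i - j) % 2 = 0 then (((m-j).choose ((i-j)/2)) : ℝ) else 0) := by
  by_cases hji : j ≤ i
  · by_cases hpar : (i - j) % 2 = 0
    · set t := (i - j) / 2 with ht
      have hit : i = j + 2*t := by omega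
      have ect : ((i:ℚ) - j)/2 = (t:ℚ) := by
        rw [hit]; push_cast; ring
      by_cases hij : i + j ≤ n
      · set s := (n - i - j) / 2 with hs
        have hns : n = i + j + 2*s := by omega
        have ecs : ((n:ℚ) - i - j)/2 = (s:ℚ) := by
          rw [hns]; push_cast; ring
        have hsum : j + s + t = m := by omega
        have htm : t ≤ m - j := by omega
        have hsm : m - j - t = s := by omega
        rw [ect, ecs, M3, if_pos]
        · simp only [Rat.num_natCast, Int.toNat_natCast]
          rw [if_pos ⟨hji, hpar⟩, Nat.cast_choose ℝ hj, Nat.cast_choose ℝ htm, hsm]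
          have n1 : (Nat.factorial j : ℝ) ≠ 0 := Nat.cast_ne_zero.2 (Nat.factorial_ne_zero _)
          have n2 : (Nat.factorial s : ℝ) ≠ 0 := Nat.cast_ne_zero.2 (Nat.factorial_ne_zero _)
          have n3 : (Nat.factorial t : ℝ) ≠ 0 := Nat.cast_ne_zero.2 (Nat.factorial_ne_zero _)
          have n4 : (Nat.factorial (m - j) : ℝ) ≠ 0 := Nat.cast_ne_zero.2 (Nat.factorial_ne_zero _)
          field_simp
        · refine ⟨by positivity, by positivity, by positivity, Rat.den_natCast _,
            Rat.den_natCast _, Rat.den_natCast _, ?_⟩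
          push_cast
          exact_mod_cast congrArg (Nat.cast : ℕ → ℚ) hsum
      · -- i + j > n : both sides zero
        rw [M3, if_neg, if_pos ⟨hji, hpar⟩]
        · have hz : (m - j).choose t = 0 := Nat.choose_eq_zero_of_lt (by omega)
          rw [hz]
          simp
        · rintro ⟨-, hb, -⟩
          have : ((n:ℚ) - i - j) < 0 := by
            have : (n:ℚ) < i + j := by exact_mod_cast (by omega : n < i + j)
            linarith
          linarith [hb]
    · -- parity fails : both sides zero
      rw [M3, if_neg, if_neg (by tauto)]
      · simp
      · rintro ⟨-, -, -, -, -, hden, -⟩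
        rw [Rat.den_eq_one_iff] at hden
        set c : ℚ := ((i:ℚ) - j)/2 with hc
        have : ((i - j : ℕ) : ℚ) = 2 * (c.num : ℚ) := by
          push_cast [Nat.cast_sub hji]
          rw [hden, hc]
          ring
        have : ((i - j : ℕ) : ℤ) = 2 * c.num := by exact_mod_cast this
        omega
  · -- j > i : both sides zero
    rw [M3, if_neg, if_neg (by tauto)]
    · simp
    · rintro ⟨-, -, hc, -⟩
      have : ((i:ℚ) - j) < 0 := by
        have : (i:ℚ) < j := by exact_mod_cast (by omega : i < j)
        linarith
      nlinarith [hc]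

/-- The combinatorial identity of Proposition `SEAWORLD`: both sides count with
weights the distributions of a perfect matching of `{1,…,n}` between a part of
size `i` and a part of size `n−i`.  All terms with `j₁ + j₂ > n/2` (resp.
`j > n/2`) vanish, so the finite ranges capture the full sums. -/
theorem stmt10 (n : ℕ) (hn : 0 < n) (hne : Even n) (p : ℝ) (hp0 : 0 < p) (hp1 : p ≤ 1)
    (i : ℕ) (hi : i ≤ n) :
    ∑ j1 ∈ Finset.range (n / 2 + 1), ∑ j2 ∈ Finset.range (n / 2 + 1),
        ((1 - p) / p) ^ (j1 + j2) * Mcoef (n / 2) j1 j2 *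
          Cb ((n : ℤ) - 2 * j1 - 2 * j2) ((i : ℤ) - 2 * j2)
      = ∑ j ∈ Finset.range (n / 2 + 1),
          (2 : ℝ) ^ j * (1 / p) ^ (n / 2 - j) *
            M3 (n / 2) (j : ℚ) (((n : ℚ) - i - j) / 2) (((i : ℚ) - j) / 2) := by
  have hm2 : n % 2 = 0 := Nat.even_iff.mp hne
  set m := n / 2 with hm
  have hn2 : n = 2 * m := by omega
  set q : ℝ := (1 - p) / p with hq
  have hp : p ≠ 0 := ne_of_gt hp0
  have hr : (1 : ℝ)/p = 1 + q := by
    rw [hq]; field_simp; ring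
  -- the polynomial, two ways
  have hP : (Polynomial.C q * (1 + Polynomial.X ^ 2) + (1 + Polynomial.X) ^ 2 : Polynomial ℝ)
      = Polynomial.C (1/p) * (1 + Polynomial.X ^ 2) + Polynomial.C 2 * Polynomial.X := by
    have h2 : (Polynomial.C (2:ℝ)) = 2 := map_ofNat Polynomial.C 2
    rw [hr, map_add, map_one, h2]
    ring
  have key : (∑ k ∈ Finset.range (m+1), ∑ b ∈ Finset.range (m+1),
          q ^ k * ((m.choose k : ℝ) * (k.choose b : ℝ)) *
            (if 2*b ≤ i then (((2*(m-k)).choose (i - 2*b)) : ℝ) else 0))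
      = ∑ j ∈ Finset.range (m+1), 2 ^ j * (1/p) ^ (m - j) * (m.choose j : ℝ) *
          (if j ≤ i ∧ (i - j) % 2 = 0 then (((m-j).choose ((i-j)/2)) : ℝ) else 0) := by
    rw [← wayA q m i, hP, wayB]
  -- LHS equals double sum
  have hL : ∑ j1 ∈ Finset.range (m + 1), ∑ j2 ∈ Finset.range (m + 1),
        q ^ (j1 + j2) * Mcoef m j1 j2 *
          Cb ((n : ℤ) - 2 * j1 - 2 * j2) ((i : ℤ) - 2 * j2)
      = ∑ k ∈ Finset.range (m+1), ∑ b ∈ Finset.range (m+1),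
          q ^ k * ((m.choose k : ℝ) * (k.choose b : ℝ)) *
            (if 2*b ≤ i then (((2*(m-k)).choose (i - 2*b)) : ℝ) else 0) := by
    rw [← Finset.sum_product', ← Finset.sum_product']
    rw [← Finset.sum_filter_of_ne (p := fun z : ℕ × ℕ => z.1 + z.2 ≤ m)
        (f := fun z : ℕ × ℕ => q ^ (z.1 + z.2) * Mcoef m z.1 z.2 *
          Cb ((n : ℤ) - 2 * z.1 - 2 * z.2) ((i : ℤ) - 2 * z.2))
        (by
          intro z hz hnz
          by_contra hc
          apply hnz
          simp only [Mcoef, if_neg hc]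
          ring)]
    rw [← Finset.sum_filter_of_ne (p := fun z : ℕ × ℕ => z.2 ≤ z.1)
        (f := fun z : ℕ × ℕ => q ^ z.1 * ((m.choose z.1 : ℝ) * (z.1.choose z.2 : ℝ)) *
          (if 2*z.2 ≤ i then (((2*(m-z.1)).choose (i - 2*z.2)) : ℝ) else 0))
        (by
          intro z hz hnz
          by_contra hc
          apply hnz
          have hz0 : z.1.choose z.2 = 0 := Nat.choose_eq_zero_of_lt (by omega)
          simp only [hz0, Nat.cast_zero]
          ring)]
    refine Finset.sum_nbij' (fun z => (z.1 + z.2, z.2)) (fun z => (z.1 - z.2, z.2)) ?_ ?_ ?_ ?_ ?_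
    · intro a ha
      simp only [Finset.mem_filter, Finset.mem_product, Finset.mem_range, Nat.lt_succ_iff] at ha ⊢
      omega
    · intro a ha
      simp only [Finset.mem_filter, Finset.mem_product, Finset.mem_range, Nat.lt_succ_iff] at ha ⊢
      omega
    · intro a ha
      simp only [Finset.mem_filter] at ha
      ext <;> simp <;> omega
    · intro a ha
      simp only [Finset.mem_filter, Finset.mem_product, Finset.mem_range, Nat.lt_succ_iff] at ha
      ext <;> simp <;> omega
    · intro a ha
      simp only [Finset.mem_filter, Finset.mem_product, Finset.mem_range, Nat.lt_succ_iff] at ha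
      rw [McoefEq m a.1 a.2 ha.2, CbEq n m i a.1 a.2 hn2 ha.2]
  rw [hL, key]
  refine Finset.sum_congr rfl fun j hj => ?_
  simp only [Finset.mem_range, Nat.lt_succ_iff] at hj
  rw [M3Eq n m i j hn2 hi hj]
  ring
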